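/- Fix a real Δ > 5, an integer 0 ≤ i ≤ k−1, and vertices x, y ∈ V with d_G(x, y) ≥ (3Δ)^i · W(x, y). Then at least one of the following holds: (1) d_H(x, y) ≤ (1 + 8i/(Δ−5)) · d_G(x, y); or (2) A_{i+1} ≠ ∅ and d_H(x, p_{i+1}(x)) ≤ (2Δ/(Δ−5)) · d_G(x, y). -/

import Mathlib

open scoped ENNReal Classical

namespace ASP

variable {V : Type*}

noncomputable def wWeight {G : SimpleGraph V} (w : V → V → ℝ≥0∞) {x y : V}
    (p : G.Walk x y) : ℝ≥0∞ :=
  (p.darts.map fun d => w d.toProd.1 d.toProd.2).sum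

noncomputable def gdist (G : SimpleGraph V) (w : V → V → ℝ≥0∞) (x y : V) : ℝ≥0∞ :=
  ⨅ p : G.Walk x y, wWeight w p

noncomputable def maxW {G : SimpleGraph V} (w : V → V → ℝ≥0∞) {x y : V}
    (p : G.Walk x y) : ℝ≥0∞ :=
  (p.darts.map fun d => w d.toProd.1 d.toProd.2).foldr max 0

/-- The half-bunch of a vertex `u` of level `i`: all vertices of `A i` closer to `u` than half
the distance from `u` to `A (i+1)` (vacuously all of `A i` if `A (i+1) = ∅`), together with the
pivots of all nonempty higher levels. -/
def halfBunch (G : SimpleGraph V) (w : V → V → ℝ≥0∞) (A : ℕ → Set V) (pv : ℕ → V → V)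
    (k i : ℕ) (u : V) : Set V :=
  {v | v ∈ A i ∧ ∀ a ∈ A (i + 1), gdist G w u v < gdist G w u a / 2} ∪
    {v | ∃ j, i < j ∧ j < k ∧ (A j).Nonempty ∧ v = pv j u}

/-- The spanner `H`: the subgraph of `G` which is the union of the fixed shortest paths `P u v`
over all `u ∈ A i \ A (i+1)` and `v` in the half-bunch of `u`. -/
def spanGraph (G : SimpleGraph V) (w : V → V → ℝ≥0∞) (A : ℕ → Set V) (pv : ℕ → V → V)
    (k : ℕ) (P : ∀ u v : V, G.Walk u v) : SimpleGraph V where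
  Adj a b := ∃ u v i, u ∈ A i ∧ u ∉ A (i + 1) ∧ v ∈ halfBunch G w A pv k i u ∧
      s(a, b) ∈ (P u v).edges
  symm := by
    constructor
    rintro a b ⟨u, v, i, h1, h2, h3, he⟩
    exact ⟨u, v, i, h1, h2, h3, by rwa [Sym2.eq_swap] at he⟩
  loopless := by
    constructor
    rintro a ⟨u, v, i, _, _, _, he⟩
    exact G.loopless.irrefl a ((P u v).adj_of_mem_edges he)


section basic
variable {G : SimpleGraph V} (w : V → V → ℝ≥0∞)

@[simp] lemma wWeight_nil {x : V} : wWeight w (SimpleGraph.Walk.nil : G.Walk x x) = 0 := rfl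

@[simp] lemma wWeight_cons {x y z : V} (h : G.Adj x y) (p : G.Walk y z) :
    wWeight w (SimpleGraph.Walk.cons h p) = w x y + wWeight w p := by
  simp [wWeight]

lemma wWeight_append {x y z : V} (p : G.Walk x y) (q : G.Walk y z) :
    wWeight w (p.append q) = wWeight w p + wWeight w q := by
  simp [wWeight, SimpleGraph.Walk.darts_append]

lemma wWeight_reverse (hws : ∀ u v, G.Adj u v → w u v = w v u) {x y : V} (p : G.Walk x y) :
    wWeight w p.reverse = wWeight w p := by
  induction p with
  | nil => rfl
  | cons h p ih =>
    rw [SimpleGraph.Walk.reverse_cons, wWeight_append, ih, wWeight_cons]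
    simp [wWeight, hws _ _ h.symm]
    exact add_comm _ _

@[simp] lemma maxW_nil {x : V} : maxW w (SimpleGraph.Walk.nil : G.Walk x x) = 0 := rfl

@[simp] lemma maxW_cons {x y z : V} (h : G.Adj x y) (p : G.Walk y z) :
    maxW w (SimpleGraph.Walk.cons h p) = max (w x y) (maxW w p) := by
  simp [maxW]

lemma maxW_append {x y z : V} (p : G.Walk x y) (q : G.Walk y z) :
    maxW w (p.append q) = max (maxW w p) (maxW w q) := by
  induction p with
  | nil => simp
  | cons h p ih => simp [ih, max_assoc]

lemma maxW_reverse (hws : ∀ u v, G.Adj u v → w u v = w v u) {x y : V} (p : G.Walk x y) :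
    maxW w p.reverse = maxW w p := by
  induction p with
  | nil => rfl
  | cons h p ih =>
    rw [SimpleGraph.Walk.reverse_cons, maxW_append, ih, maxW_cons]
    simp [maxW, hws _ _ h.symm]
    try rw [max_comm]

lemma gdist_le {x y : V} (p : G.Walk x y) : gdist G w x y ≤ wWeight w p := iInf_le _ p

@[simp] lemma gdist_self (x : V) : gdist G w x x = 0 :=
  le_antisymm (by simpa using gdist_le w (SimpleGraph.Walk.nil : G.Walk x x)) (zero_le)

lemma gdist_triangle (x z y : V) : gdist G w x y ≤ gdist G w x z + gdist G w z y := by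
  calc gdist G w x y ≤ ⨅ (p : G.Walk x z), (wWeight w p + gdist G w z y) := by
        refine le_iInf fun p => ?_
        calc gdist G w x y ≤ ⨅ (q : G.Walk z y), (wWeight w p + wWeight w q) :=
              le_iInf fun q => (gdist_le w (p.append q)).trans_eq (wWeight_append w p q)
          _ = wWeight w p + gdist G w z y := ENNReal.add_iInf.symm
    _ = gdist G w x z + gdist G w z y := ENNReal.iInf_add.symm

lemma gdist_comm (hws : ∀ u v, G.Adj u v → w u v = w v u) (x y : V) :
    gdist G w x y = gdist G w y x := by
  have : ∀ a b : V, gdist G w a b ≤ gdist G w b a := fun a b => by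
    refine le_iInf fun p => ?_
    exact (gdist_le w p.reverse).trans_eq (wWeight_reverse w hws p)
  exact le_antisymm (this x y) (this y x)

lemma gdist_ne_top (hconn : G.Connected) (hwfin : ∀ u v, G.Adj u v → w u v ≠ ⊤) (x y : V) :
    gdist G w x y ≠ ⊤ := by
  obtain ⟨p⟩ := hconn x y
  refine ne_top_of_le_ne_top ?_ (gdist_le w p)
  induction p with
  | nil => simp
  | cons h p ih => rw [wWeight_cons]; exact ENNReal.add_ne_top.2 ⟨hwfin _ _ h, ih⟩

lemma wWeight_mapLe {H : SimpleGraph V} (hle : H ≤ G) {x y : V} (p : H.Walk x y) :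
    wWeight w (p.mapLe hle) = wWeight w p := by
  induction p with
  | nil => rfl
  | cons h p ih =>
    simp only [SimpleGraph.Walk.mapLe, SimpleGraph.Walk.map_cons] at *
    rw [wWeight_cons, ih]
    rfl

lemma gdist_anti {H : SimpleGraph V} (hle : H ≤ G) (x y : V) :
    gdist G w x y ≤ gdist H w x y := by
  refine le_iInf fun p => ?_
  exact (gdist_le w (p.mapLe hle)).trans_eq (wWeight_mapLe w hle p)

lemma wWeight_transfer {H : SimpleGraph V} {x y : V} (p : G.Walk x y)
    (h : ∀ e ∈ p.edges, e ∈ H.edgeSet) : wWeight w (p.transfer H h) = wWeight w p := by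
  induction p with
  | nil => rfl
  | cons ha p ih =>
    simp [SimpleGraph.Walk.transfer, ih]
    exact congrArg (w _ _ + ·) (ih _)

lemma edge_le_maxW {x y : V} (p : G.Walk x y) (d : G.Dart) (hd : d ∈ p.darts) :
    w d.toProd.1 d.toProd.2 ≤ maxW w p := by
  induction p with
  | nil => simp at hd
  | cons h p ih =>
    rw [SimpleGraph.Walk.darts_cons, List.mem_cons] at hd
    rcases hd with rfl | hd
    · simp
    · exact (ih hd).trans (by simp)

end basic



section main

variable {G : SimpleGraph V} {w : V → V → ℝ≥0∞} {k : ℕ} {A : ℕ → Set V} {pv : ℕ → V → V}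
  {P : ∀ u v : V, G.Walk u v} {Δ : ℝ}

local notation "Hg" => spanGraph G w A pv k P

lemma spanGraph_le : spanGraph G w A pv k P ≤ G := by
  rintro a b ⟨u, v, i, _, _, _, he⟩
  exact (P u v).adj_of_mem_edges he

lemma hwsymH (hwsym : ∀ u v, G.Adj u v → w u v = w v u) :
    ∀ u v, (spanGraph G w A pv k P).Adj u v → w u v = w v u :=
  fun u v h => hwsym u v (spanGraph_le h)

section lev
variable (hAnest : ∀ i, A (i + 1) ⊆ A i) (hAk : A k = ∅)

lemma Amono (hAnest : ∀ i, A (i + 1) ⊆ A i) {a b : ℕ} (hab : a ≤ b) : A b ⊆ A a := by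
  induction hab with
  | refl => exact subset_rfl
  | step h ih => exact fun x hx => ih (hAnest _ hx)

lemma nonempty_lt_k (hAnest : ∀ i, A (i + 1) ⊆ A i) (hAk : A k = ∅) {j : ℕ}
    (h : (A j).Nonempty) : j < k := by
  by_contra hj
  obtain ⟨u, hu⟩ := h
  exact absurd (hAk ▸ Amono hAnest (not_lt.1 hj) hu) (Set.notMem_empty u)

noncomputable def lev (hAnest : ∀ i, A (i + 1) ⊆ A i) (hAk : A k = ∅) (u : V) : ℕ :=
  Nat.find (p := fun j => u ∉ A (j + 1))
    ⟨k, fun hu => Set.notMem_empty u (hAk ▸ hAnest k hu)⟩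

lemma lev_spec (u : V) : u ∉ A (lev hAnest hAk u + 1) := by
  unfold lev
  exact Nat.find_spec (p := fun j => u ∉ A (j + 1)) _

lemma lev_mem (hA0 : A 0 = Set.univ) (u : V) : u ∈ A (lev hAnest hAk u) := by
  cases h : lev hAnest hAk u with
  | zero => rw [hA0]; trivial
  | succ n =>
    have hm : ¬ (u ∉ A (n + 1)) := by
      unfold lev at h
      exact Nat.find_min (p := fun j => u ∉ A (j + 1)) _ (by rw [h]; exact n.lt_succ_self)
    exact not_not.1 hm

lemma le_lev_of_mem {u : V} {j : ℕ} (h : u ∈ A j) : j ≤ lev hAnest hAk u := by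
  by_contra hj
  push_neg at hj
  exact lev_spec hAnest hAk u (Amono hAnest (Nat.succ_le_of_lt hj) h)

end lev

lemma gdistH_le_of_bunch (hP : ∀ u v i, u ∈ A i → u ∉ A (i + 1) → v ∈ halfBunch G w A pv k i u →
      (P u v).IsPath ∧ wWeight w (P u v) = gdist G w u v)
    {u v : V} {i : ℕ} (hu : u ∈ A i) (hu' : u ∉ A (i + 1))
    (hv : v ∈ halfBunch G w A pv k i u) :
    gdist (spanGraph G w A pv k P) w u v ≤ gdist G w u v := by
  obtain ⟨hpath, hwt⟩ := hP u v i hu hu' hv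
  have hedges : ∀ e ∈ (P u v).edges, e ∈ (spanGraph G w A pv k P).edgeSet := by
    intro e he
    induction e with
    | _ a b => exact ⟨u, v, i, hu, hu', hv, he⟩
  exact (gdist_le w ((P u v).transfer _ hedges)).trans_eq
    ((wWeight_transfer w _ hedges).trans hwt)


section zero
variable (hconn : G.Connected) (hwsym : ∀ u v, G.Adj u v → w u v = w v u)
  (hA0 : A 0 = Set.univ) (hAnest : ∀ i, A (i + 1) ⊆ A i) (hAk : A k = ∅)
  (hpv : ∀ i, i < k → ∀ v : V, (A i).Nonempty →
      pv i v ∈ A i ∧ ∀ a ∈ A i, gdist G w v (pv i v) ≤ gdist G w v a)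
  (hP : ∀ u v i, u ∈ A i → u ∉ A (i + 1) → v ∈ halfBunch G w A pv k i u →
      (P u v).IsPath ∧ wWeight w (P u v) = gdist G w u v)

include hwsym hA0 hAnest hAk hpv hP in
lemma zero_step {m : ℕ}
    (IH : ∀ u v : V, 2 * k ≤ lev hAnest hAk u + lev hAnest hAk v + m →
      gdist G w u v = 0 → gdist (spanGraph G w A pv k P) w u v = 0)
    {u v : V} (hord : lev hAnest hAk u ≤ lev hAnest hAk v)
    (hm : 2 * k ≤ lev hAnest hAk u + lev hAnest hAk v + (m + 1))
    (h0 : gdist G w u v = 0) :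
    gdist (spanGraph G w A pv k P) w u v = 0 := by
  by_cases hc : ∃ c ∈ A (lev hAnest hAk u + 1), gdist G w u c = 0
  · obtain ⟨c, hcA, hc0⟩ := hc
    have hak : lev hAnest hAk u + 1 < k := nonempty_lt_k hAnest hAk ⟨c, hcA⟩
    obtain ⟨hpA, hpmin⟩ := hpv _ hak u ⟨c, hcA⟩
    set p := pv (lev hAnest hAk u + 1) u with hp
    have hup : gdist G w u p = 0 :=
      le_antisymm ((hpmin c hcA).trans_eq hc0) (zero_le)
    have hbun : p ∈ halfBunch G w A pv k (lev hAnest hAk u) u :=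
      Or.inr ⟨_, Nat.lt_succ_self _, hak, ⟨c, hcA⟩, rfl⟩
    have hDup : gdist (spanGraph G w A pv k P) w u p = 0 :=
      le_antisymm ((gdistH_le_of_bunch hP (lev_mem hAnest hAk hA0 u)
        (lev_spec hAnest hAk u) hbun).trans_eq hup) (zero_le)
    have hpv0 : gdist G w p v = 0 := by
      refine le_antisymm ((gdist_triangle w p u v).trans ?_) (zero_le)
      rw [gdist_comm w hwsym p u, hup, h0, add_zero]
    have hDpv : gdist (spanGraph G w A pv k P) w p v = 0 := by
      refine IH p v ?_ hpv0
      have := le_lev_of_mem hAnest hAk hpA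
      omega
    refine le_antisymm ((gdist_triangle w u p v).trans ?_) (zero_le)
    rw [hDup, hDpv, add_zero]
  · push_neg at hc
    have hvA : v ∈ A (lev hAnest hAk u) :=
      Amono hAnest hord (lev_mem hAnest hAk hA0 v)
    have hbun : v ∈ halfBunch G w A pv k (lev hAnest hAk u) u := by
      refine Or.inl ⟨hvA, fun c hcA => ?_⟩
      rw [h0]
      exact pos_iff_ne_zero.2 (by simp [ENNReal.div_eq_zero_iff, hc c hcA])
    exact le_antisymm ((gdistH_le_of_bunch hP (lev_mem hAnest hAk hA0 u)
      (lev_spec hAnest hAk u) hbun).trans_eq h0) (zero_le)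

include hwsym hA0 hAnest hAk hpv hP in
lemma zero_lemma : ∀ (m : ℕ) (u v : V),
    2 * k ≤ lev hAnest hAk u + lev hAnest hAk v + m →
    gdist G w u v = 0 → gdist (spanGraph G w A pv k P) w u v = 0 := by
  intro m
  induction m with
  | zero =>
    intro u v hm h0
    have hu : lev hAnest hAk u < k :=
      nonempty_lt_k hAnest hAk ⟨u, lev_mem hAnest hAk hA0 u⟩
    have hv : lev hAnest hAk v < k :=
      nonempty_lt_k hAnest hAk ⟨v, lev_mem hAnest hAk hA0 v⟩
    omega
  | succ m ih =>
    intro u v hm h0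
    rcases le_total (lev hAnest hAk u) (lev hAnest hAk v) with h | h
    · exact zero_step hwsym hA0 hAnest hAk hpv hP ih h hm h0
    · rw [gdist_comm w (hwsymH hwsym)]
      exact zero_step hwsym hA0 hAnest hAk hpv hP ih h (by omega)
        (by rw [gdist_comm w hwsym] at h0; exact h0)

include hwsym hA0 hAnest hAk hpv hP in
lemma dist_zero (u v : V) (h0 : gdist G w u v = 0) :
    gdist (spanGraph G w A pv k P) w u v = 0 :=
  zero_lemma hwsym hA0 hAnest hAk hpv hP (2 * k) u v (by omega) h0

end zero


lemma maxW_le_wWeight {x y : V} (q : G.Walk x y) : maxW w q ≤ wWeight w q := by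
  induction q with
  | nil => simp
  | cons h p ih =>
    rw [maxW_cons, wWeight_cons]
    exact max_le le_self_add (ih.trans le_add_self)

lemma cut : ∀ {z y : V} (q : G.Walk z y) (L W' : ℝ≥0∞), W' ≠ ⊤ → L < wWeight w q →
    maxW w q ≤ W' →
    ∃ (z₁ : V) (r : G.Walk z z₁) (q' : G.Walk z₁ y),
      q = r.append q' ∧ L ≤ wWeight w r ∧ wWeight w r ≤ L + W' ∧ 0 < r.length := by
  intro z y q
  induction q with
  | nil => intro L W' _ hq _; exact absurd hq (by simp)
  | @cons a b y h p ih =>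
    intro L W' hW' hq hmax
    have hωW : w a b ≤ W' := by
      refine (edge_le_maxW w (SimpleGraph.Walk.cons h p) ⟨(a, b), h⟩ ?_).trans hmax
      rw [SimpleGraph.Walk.darts_cons]
      exact List.mem_cons_self
    have hpmax : maxW w p ≤ W' := le_trans (by rw [maxW_cons]; exact le_max_right _ _) hmax
    by_cases hLω : L ≤ w a b
    · refine ⟨b, SimpleGraph.Walk.cons h .nil, p, by simp, ?_, ?_, by simp⟩
      · simpa [wWeight] using hLω
      · simpa [wWeight] using hωW.trans le_add_self
    · push_neg at hLω
      have hωt : w a b ≠ ⊤ := (hLω.trans_le le_top).ne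
      have hsub : L - w a b < wWeight w p := by
        rw [ENNReal.sub_lt_iff_lt_right hωt hLω.le, add_comm]
        rwa [wWeight_cons] at hq
      obtain ⟨z₁, r', q', heq, h1, h2, h3⟩ := ih (L - w a b) W' hW' hsub hpmax
      have hcan : w a b + (L - w a b) = L := add_tsub_cancel_of_le hLω.le
      refine ⟨z₁, SimpleGraph.Walk.cons h r', q',
        by rw [SimpleGraph.Walk.cons_append, ← heq], ?_, ?_, by simp⟩
      · rw [wWeight_cons, ← hcan]
        exact add_le_add_right h1 _
      · rw [wWeight_cons, ← hcan, add_assoc]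
        exact add_le_add_right h2 _

lemma split_shortest (hconn : G.Connected) (hwfin : ∀ u v, G.Adj u v → w u v ≠ ⊤)
    {x z y : V} (r : G.Walk x z) (q' : G.Walk z y)
    (hsh : wWeight w (r.append q') = gdist G w x y) :
    wWeight w r = gdist G w x z ∧ wWeight w q' = gdist G w z y ∧
      gdist G w x z + gdist G w z y = gdist G w x y := by
  have h3 : wWeight w r + wWeight w q' = gdist G w x y := by
    rw [← wWeight_append]; exact hsh
  have htop : wWeight w r ≠ ⊤ ∧ wWeight w q' ≠ ⊤ :=
    ENNReal.add_ne_top.1 (h3.trans_ne (gdist_ne_top w hconn hwfin x y))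
  have h1 : gdist G w x z ≤ wWeight w r := gdist_le w r
  have h2 : gdist G w z y ≤ wWeight w q' := gdist_le w q'
  have e1 : gdist G w x z + gdist G w z y = wWeight w r + wWeight w q' :=
    le_antisymm (add_le_add h1 h2) (h3 ▸ gdist_triangle w x z y)
  have er : wWeight w r = gdist G w x z := by
    have : wWeight w r + wWeight w q' ≤ gdist G w x z + wWeight w q' := by
      rw [← e1]; exact add_le_add_right h2 _
    exact le_antisymm ((ENNReal.add_le_add_iff_right htop.2).1 this) h1
  have eq' : wWeight w q' = gdist G w z y := by
    have : wWeight w q' + wWeight w r ≤ gdist G w z y + wWeight w r := by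
      rw [add_comm, ← e1, add_comm (gdist G w z y)]
      exact add_le_add_left h1 _
    exact le_antisymm ((ENNReal.add_le_add_iff_right htop.1).1 this) h2
  exact ⟨er, eq', by rw [e1, h3]⟩

lemma between (hconn : G.Connected) (hwfin : ∀ u v, G.Adj u v → w u v ≠ ⊤)
    {x z z₁ y : V} (h1 : gdist G w x z + gdist G w z y = gdist G w x y)
    (h2 : gdist G w z z₁ + gdist G w z₁ y = gdist G w z y) :
    gdist G w x z₁ + gdist G w z₁ y = gdist G w x y ∧
      gdist G w x z₁ = gdist G w x z + gdist G w z z₁ := by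
  have t4 : gdist G w x z + gdist G w z z₁ + gdist G w z₁ y = gdist G w x y := by
    rw [add_assoc, h2, h1]
  have c1 : gdist G w x z₁ + gdist G w z₁ y = gdist G w x y :=
    le_antisymm (le_trans (add_le_add_left (gdist_triangle w x z z₁) _) t4.le)
      (gdist_triangle w x z₁ y)
  refine ⟨c1, ?_⟩
  have heq : gdist G w x z₁ + gdist G w z₁ y = gdist G w x z + gdist G w z z₁ + gdist G w z₁ y :=
    c1.trans t4.symm
  exact (ENNReal.add_right_inj (gdist_ne_top w hconn hwfin z₁ y)).1
    (by rw [add_comm (gdist G w z₁ y) (gdist G w x z₁), add_comm (gdist G w z₁ y)]; exact heq)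


def Stmt (G : SimpleGraph V) (w : V → V → ℝ≥0∞) (k : ℕ) (A : ℕ → Set V) (pv : ℕ → V → V)
    (P : ∀ u v : V, G.Walk u v) (Δ : ℝ) (i : ℕ) : Prop :=
  ∀ x y (Wxy : ℝ≥0∞),
    (∃ q : G.Walk x y, q.IsPath ∧ wWeight w q = gdist G w x y ∧ maxW w q = Wxy) →
    ENNReal.ofReal ((3 * Δ) ^ i) * Wxy ≤ gdist G w x y →
    (gdist (spanGraph G w A pv k P) w x y ≤
        ENNReal.ofReal (1 + 8 * i / (Δ - 5)) * gdist G w x y ∨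
      ((A (i + 1)).Nonempty ∧
        gdist (spanGraph G w A pv k P) w x (pv (i + 1) x) ≤
          ENNReal.ofReal (2 * Δ / (Δ - 5)) * gdist G w x y))

section phases
variable (hconn : G.Connected) (hwsym : ∀ u v, G.Adj u v → w u v = w v u)
  (hwfin : ∀ u v, G.Adj u v → w u v ≠ ⊤)

include hconn hwsym hwfin in
lemma phaseR (i₀ : ℕ) (ih : Stmt G w k A pv P Δ i₀) (W' L : ℝ≥0∞) (hW't : W' ≠ ⊤)
    (hLt : L ≠ ⊤) (hWL : W' ≤ L)
    (hL2 : ∀ {g : ℝ≥0∞}, L ≤ g → ENNReal.ofReal ((3 * Δ) ^ i₀) * W' ≤ g) :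
    ∀ (n : ℕ) {z y : V} (q : G.Walk z y), q.length ≤ n → q.IsPath →
    wWeight w q = gdist G w z y → maxW w q ≤ W' → L ≤ gdist G w z y →
    gdist (spanGraph G w A pv k P) w z y ≤
        ENNReal.ofReal (1 + 8 * i₀ / (Δ - 5)) * gdist G w z y ∨
    (∃ c', gdist G w z c' + gdist G w c' y = gdist G w z y ∧ (A (i₀ + 1)).Nonempty ∧
      gdist G w c' (pv (i₀ + 1) c') ≤ ENNReal.ofReal (2 * Δ / (Δ - 5)) * (3 * L) ∧
      gdist (spanGraph G w A pv k P) w c' (pv (i₀ + 1) c') ≤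
        ENNReal.ofReal (2 * Δ / (Δ - 5)) * (3 * L) ∧
      gdist (spanGraph G w A pv k P) w c' y ≤
        ENNReal.ofReal (1 + 8 * i₀ / (Δ - 5)) * gdist G w c' y) := by
  intro n
  induction n with
  | zero =>
    intro z y q hlen _ hsh _ _
    cases q with
    | nil => left; rw [gdist_self]; exact zero_le
    | cons h p => simp at hlen
  | succ n ihn =>
    intro z y q hlen hpath hsh hmax hLg
    by_cases hsmall : gdist G w z y ≤ 3 * L
    · -- single piece, apply ih to the reversed pair (y, z)
      have hmaxr : maxW w q.reverse = maxW w q := maxW_reverse w hwsym q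
      have hfar' : ENNReal.ofReal ((3 * Δ) ^ i₀) * maxW w q.reverse ≤ gdist G w y z := by
        rw [hmaxr, gdist_comm w hwsym y z]
        exact le_trans (mul_le_mul_right hmax _) (hL2 hLg)
      rcases ih y z (maxW w q.reverse)
        ⟨q.reverse, hpath.reverse,
          (wWeight_reverse w hwsym q).trans (hsh.trans (gdist_comm w hwsym z y)), rfl⟩
        hfar' with h1 | ⟨hne, hpiv⟩
      · left
        rw [gdist_comm w (hwsymH hwsym) z y, gdist_comm w hwsym z y]
        exact h1
      · right
        refine ⟨y, by rw [gdist_self, add_zero], hne, ?_, ?_, ?_⟩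
        · refine (gdist_anti w spanGraph_le y _).trans (hpiv.trans ?_)
          rw [gdist_comm w hwsym y z]
          exact mul_le_mul_right hsmall _
        · refine hpiv.trans ?_
          rw [gdist_comm w hwsym y z]
          exact mul_le_mul_right hsmall _
        · rw [gdist_self, gdist_self, mul_zero]
    · push_neg at hsmall
      have hq3 : 3 * L < wWeight w q := by rw [hsh]; exact hsmall
      have hLlt : L < wWeight w q := by
        refine lt_of_le_of_lt ?_ hq3
        calc L = 1 * L := (one_mul L).symm
        _ ≤ 3 * L := mul_le_mul_left (by norm_num) L
      obtain ⟨z₁, r, q', heq, hr1, hr2, hrlen⟩ := cut q L W' hW't hLlt hmax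
      rw [heq] at hpath hsh hmax hlen
      obtain ⟨hwr, hwq', hadd⟩ := split_shortest hconn hwfin r q' hsh
      have hrpath : r.IsPath := hpath.of_append_left
      have hq'path : q'.IsPath := hpath.of_append_right
      rw [maxW_append] at hmax
      have hrmax : maxW w r ≤ W' := le_trans (le_max_left _ _) hmax
      have hq'max : maxW w q' ≤ W' := le_trans (le_max_right _ _) hmax
      have hg1l : L ≤ gdist G w z z₁ := hwr ▸ hr1
      have hg1u : gdist G w z z₁ ≤ 2 * L := by
        rw [← hwr]
        refine hr2.trans ?_
        rw [two_mul]
        exact add_le_add_right hWL _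
      have hg1u3 : gdist G w z z₁ ≤ 3 * L := hg1u.trans (by
        refine mul_le_mul_left ?_ L; norm_num)
      have hLg' : L ≤ gdist G w z₁ y := by
        have h23 : (2 : ℝ≥0∞) * L + L < 2 * L + gdist G w z₁ y := by
          calc 2 * L + L = 3 * L := by ring
          _ < gdist G w z y := hsmall
          _ = gdist G w z z₁ + gdist G w z₁ y := hadd.symm
          _ ≤ 2 * L + gdist G w z₁ y := add_le_add_left hg1u _
        exact le_of_lt ((ENNReal.add_lt_add_iff_left (by
          exact ENNReal.mul_ne_top (by norm_num) hLt)).1 h23)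
      have hlen' : q'.length ≤ n := by
        rw [SimpleGraph.Walk.length_append] at hlen
        omega
      rcases ihn q' hlen' hq'path hwq' hq'max hLg' with hR1 | ⟨c', hc'add, hrest⟩
      · -- suffix good; process the piece r reversed
        have hfar' : ENNReal.ofReal ((3 * Δ) ^ i₀) * maxW w r.reverse ≤ gdist G w z₁ z := by
          rw [maxW_reverse w hwsym, gdist_comm w hwsym z₁ z]
          exact le_trans (mul_le_mul_right hrmax _) (hL2 hg1l)
        rcases ih z₁ z (maxW w r.reverse)
          ⟨r.reverse, hrpath.reverse,
            (wWeight_reverse w hwsym r).trans (hwr.trans (gdist_comm w hwsym z z₁)), rfl⟩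
          hfar' with hgood | ⟨hne, hpiv⟩
        · left
          calc gdist (spanGraph G w A pv k P) w z y ≤
              gdist (spanGraph G w A pv k P) w z z₁ +
                gdist (spanGraph G w A pv k P) w z₁ y := gdist_triangle w z z₁ y
          _ ≤ ENNReal.ofReal (1 + 8 * i₀ / (Δ - 5)) * gdist G w z z₁ +
              ENNReal.ofReal (1 + 8 * i₀ / (Δ - 5)) * gdist G w z₁ y := by
                refine add_le_add ?_ hR1
                rw [gdist_comm w (hwsymH hwsym) z z₁, gdist_comm w hwsym z z₁]
                exact hgood
          _ = ENNReal.ofReal (1 + 8 * i₀ / (Δ - 5)) * gdist G w z y := by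
                rw [← mul_add, hadd]
        · right
          refine ⟨z₁, hadd, hne, ?_, ?_, hR1⟩
          · refine (gdist_anti w spanGraph_le z₁ _).trans (hpiv.trans ?_)
            rw [gdist_comm w hwsym z₁ z]
            exact mul_le_mul_right hg1u3 _
          · refine hpiv.trans ?_
            rw [gdist_comm w hwsym z₁ z]
            exact mul_le_mul_right hg1u3 _
      · right
        exact ⟨c', (between hconn hwfin hadd hc'add).1, hrest⟩


include hconn hwsym hwfin in
lemma phaseL (i₀ : ℕ) (ih : Stmt G w k A pv P Δ i₀) (W' L : ℝ≥0∞) (hW't : W' ≠ ⊤)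
    (hLt : L ≠ ⊤) (hWL : W' ≤ L)
    (hL2 : ∀ {g : ℝ≥0∞}, L ≤ g → ENNReal.ofReal ((3 * Δ) ^ i₀) * W' ≤ g) (x y : V) :
    ∀ (n : ℕ) {z : V} (q : G.Walk z y), q.length ≤ n → q.IsPath →
    wWeight w q = gdist G w z y → maxW w q ≤ W' → L ≤ gdist G w z y →
    gdist G w x z + gdist G w z y = gdist G w x y →
    gdist (spanGraph G w A pv k P) w x z ≤
      ENNReal.ofReal (1 + 8 * i₀ / (Δ - 5)) * gdist G w x z →
    gdist (spanGraph G w A pv k P) w x y ≤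
        ENNReal.ofReal (1 + 8 * i₀ / (Δ - 5)) * gdist G w x y ∨
    (∃ b c', gdist G w x b + gdist G w b c' + gdist G w c' y = gdist G w x y ∧
      (A (i₀ + 1)).Nonempty ∧
      gdist G w b (pv (i₀ + 1) b) ≤ ENNReal.ofReal (2 * Δ / (Δ - 5)) * (3 * L) ∧
      gdist (spanGraph G w A pv k P) w b (pv (i₀ + 1) b) ≤
        ENNReal.ofReal (2 * Δ / (Δ - 5)) * (3 * L) ∧
      gdist G w c' (pv (i₀ + 1) c') ≤ ENNReal.ofReal (2 * Δ / (Δ - 5)) * (3 * L) ∧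
      gdist (spanGraph G w A pv k P) w c' (pv (i₀ + 1) c') ≤
        ENNReal.ofReal (2 * Δ / (Δ - 5)) * (3 * L) ∧
      gdist (spanGraph G w A pv k P) w x b ≤
        ENNReal.ofReal (1 + 8 * i₀ / (Δ - 5)) * gdist G w x b ∧
      gdist (spanGraph G w A pv k P) w c' y ≤
        ENNReal.ofReal (1 + 8 * i₀ / (Δ - 5)) * gdist G w c' y) := by
  intro n
  induction n with
  | zero =>
    intro z q hlen _ _ _ _ _ hpre
    cases q with
    | nil => exact Or.inl hpre
    | cons h p => simp at hlen
  | succ n ihn =>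
    intro z q hlen hpath hsh hmax hLg hOn hpre
    have hcomb : gdist (spanGraph G w A pv k P) w z y ≤
        ENNReal.ofReal (1 + 8 * i₀ / (Δ - 5)) * gdist G w z y →
        gdist (spanGraph G w A pv k P) w x y ≤
        ENNReal.ofReal (1 + 8 * i₀ / (Δ - 5)) * gdist G w x y := by
      intro hzy
      calc gdist (spanGraph G w A pv k P) w x y ≤
          gdist (spanGraph G w A pv k P) w x z +
            gdist (spanGraph G w A pv k P) w z y := gdist_triangle w x z y
      _ ≤ ENNReal.ofReal (1 + 8 * i₀ / (Δ - 5)) * gdist G w x z +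
          ENNReal.ofReal (1 + 8 * i₀ / (Δ - 5)) * gdist G w z y := add_le_add hpre hzy
      _ = ENNReal.ofReal (1 + 8 * i₀ / (Δ - 5)) * gdist G w x y := by rw [← mul_add, hOn]
    by_cases hsmall : gdist G w z y ≤ 3 * L
    · have hfar' : ENNReal.ofReal ((3 * Δ) ^ i₀) * maxW w q ≤ gdist G w z y :=
        (mul_le_mul_right hmax _).trans (hL2 hLg)
      rcases ih z y (maxW w q) ⟨q, hpath, hsh, rfl⟩ hfar' with hgood | ⟨hne, hpiv⟩
      · exact Or.inl (hcomb hgood)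
      · rcases phaseR hconn hwsym hwfin i₀ ih W' L hW't hLt hWL hL2 q.length q le_rfl
          hpath hsh hmax hLg with hR1 | ⟨c', hcadd, hne', hc1, hc2, hc3⟩
        · exact Or.inl (hcomb hR1)
        · right
          have hbpiv : gdist (spanGraph G w A pv k P) w z (pv (i₀ + 1) z) ≤
              ENNReal.ofReal (2 * Δ / (Δ - 5)) * (3 * L) :=
            hpiv.trans (mul_le_mul_right hsmall _)
          exact ⟨z, c', by rw [add_assoc, hcadd, hOn], hne,
            (gdist_anti w spanGraph_le z _).trans hbpiv, hbpiv, hc1, hc2, hpre, hc3⟩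
    · push_neg at hsmall
      have hq3 : 3 * L < wWeight w q := by rw [hsh]; exact hsmall
      have hLlt : L < wWeight w q := by
        refine lt_of_le_of_lt ?_ hq3
        calc L = 1 * L := (one_mul L).symm
        _ ≤ 3 * L := mul_le_mul_left (by norm_num) L
      obtain ⟨z₁, r, q', heq, hr1, hr2, hrlen⟩ := cut q L W' hW't hLlt hmax
      rw [heq] at hpath hsh hmax hlen
      obtain ⟨hwr, hwq', hadd⟩ := split_shortest hconn hwfin r q' hsh
      have hrpath : r.IsPath := hpath.of_append_left
      have hq'path : q'.IsPath := hpath.of_append_right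
      have hmax' := hmax
      rw [maxW_append] at hmax'
      have hrmax : maxW w r ≤ W' := le_trans (le_max_left _ _) hmax'
      have hq'max : maxW w q' ≤ W' := le_trans (le_max_right _ _) hmax'
      have hg1l : L ≤ gdist G w z z₁ := hwr ▸ hr1
      have hg1u : gdist G w z z₁ ≤ 2 * L := by
        rw [← hwr]
        refine hr2.trans ?_
        rw [two_mul]
        exact add_le_add_right hWL _
      have hg1u3 : gdist G w z z₁ ≤ 3 * L := hg1u.trans (by
        refine mul_le_mul_left ?_ L; norm_num)
      have hLg' : L ≤ gdist G w z₁ y := by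
        have h23 : (2 : ℝ≥0∞) * L + L < 2 * L + gdist G w z₁ y := by
          calc 2 * L + L = 3 * L := by ring
          _ < gdist G w z y := hsmall
          _ = gdist G w z z₁ + gdist G w z₁ y := hadd.symm
          _ ≤ 2 * L + gdist G w z₁ y := add_le_add_left hg1u _
        exact le_of_lt ((ENNReal.add_lt_add_iff_left
          (ENNReal.mul_ne_top (by norm_num) hLt)).1 h23)
      have hlen' : q'.length ≤ n := by
        rw [SimpleGraph.Walk.length_append] at hlen
        omega
      have hfarr : ENNReal.ofReal ((3 * Δ) ^ i₀) * maxW w r ≤ gdist G w z z₁ :=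
        (mul_le_mul_right hrmax _).trans (hL2 hg1l)
      rcases ih z z₁ (maxW w r) ⟨r, hrpath, hwr, rfl⟩ hfarr with hgood | ⟨hne, hpiv⟩
      · obtain ⟨hOn', hxz₁⟩ := between hconn hwfin hOn hadd
        have hpre' : gdist (spanGraph G w A pv k P) w x z₁ ≤
            ENNReal.ofReal (1 + 8 * i₀ / (Δ - 5)) * gdist G w x z₁ := by
          calc gdist (spanGraph G w A pv k P) w x z₁ ≤
              gdist (spanGraph G w A pv k P) w x z +
                gdist (spanGraph G w A pv k P) w z z₁ := gdist_triangle w x z z₁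
          _ ≤ ENNReal.ofReal (1 + 8 * i₀ / (Δ - 5)) * gdist G w x z +
              ENNReal.ofReal (1 + 8 * i₀ / (Δ - 5)) * gdist G w z z₁ := add_le_add hpre hgood
          _ = ENNReal.ofReal (1 + 8 * i₀ / (Δ - 5)) * gdist G w x z₁ := by
                rw [← mul_add, ← hxz₁]
        exact ihn q' hlen' hq'path hwq' hq'max hLg' hOn' hpre'
      · rcases phaseR hconn hwsym hwfin i₀ ih W' L hW't hLt hWL hL2
          (r.append q').length (r.append q') le_rfl hpath hsh hmax hLg
          with hR1 | ⟨c', hcadd, hne', hc1, hc2, hc3⟩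
        · exact Or.inl (hcomb hR1)
        · right
          have hbpiv : gdist (spanGraph G w A pv k P) w z (pv (i₀ + 1) z) ≤
              ENNReal.ofReal (2 * Δ / (Δ - 5)) * (3 * L) :=
            hpiv.trans (mul_le_mul_right hg1u3 _)
          exact ⟨z, c', by rw [add_assoc, hcadd, hOn], hne,
            (gdist_anti w spanGraph_le z _).trans hbpiv, hbpiv, hc1, hc2, hpre, hc3⟩



lemma reach_pivot
    (hA0 : A 0 = Set.univ) (hAnest : ∀ i, A (i + 1) ⊆ A i) (hAk : A k = ∅)
    (hP : ∀ u v i, u ∈ A i → u ∉ A (i + 1) → v ∈ halfBunch G w A pv k i u →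
      (P u v).IsPath ∧ wWeight w (P u v) = gdist G w u v)
    {j : ℕ} {x : V} (hne : (A (j + 1)).Nonempty) (hx : x ∉ A (j + 1)) :
    gdist (spanGraph G w A pv k P) w x (pv (j + 1) x) ≤ gdist G w x (pv (j + 1) x) := by
  have hjk : j + 1 < k := nonempty_lt_k hAnest hAk hne
  have hlx : lev hAnest hAk x < j + 1 := by
    by_contra h
    push_neg at h
    exact hx (Amono hAnest h (lev_mem hAnest hAk hA0 x))
  exact gdistH_le_of_bunch hP (lev_mem hAnest hAk hA0 x) (lev_spec hAnest hAk x)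
    (Or.inr ⟨j + 1, hlx, hjk, hne, rfl⟩)

lemma main_all (hconn : G.Connected) (hwsym : ∀ u v, G.Adj u v → w u v = w v u)
    (hwfin : ∀ u v, G.Adj u v → w u v ≠ ⊤)
    (hA0 : A 0 = Set.univ) (hAnest : ∀ i, A (i + 1) ⊆ A i) (hAk : A k = ∅)
    (hpv : ∀ i, i < k → ∀ v : V, (A i).Nonempty →
      pv i v ∈ A i ∧ ∀ a ∈ A i, gdist G w v (pv i v) ≤ gdist G w v a)
    (hP : ∀ u v i, u ∈ A i → u ∉ A (i + 1) → v ∈ halfBunch G w A pv k i u →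
      (P u v).IsPath ∧ wWeight w (P u v) = gdist G w u v)
    (hΔ : 5 < Δ) : ∀ i, Stmt G w k A pv P Δ i := by
  have hΔ5 : (0:ℝ) < Δ - 5 := by linarith
  intro i
  induction i with
  | zero =>
    intro x y Wxy hW hfar
    by_cases hx1 : x ∈ A (0 + 1)
    · right
      refine ⟨⟨x, hx1⟩, ?_⟩
      have h1k : 0 + 1 < k := nonempty_lt_k hAnest hAk ⟨x, hx1⟩
      obtain ⟨_, hmin⟩ := hpv (0 + 1) h1k x ⟨x, hx1⟩
      have h0 : gdist G w x (pv (0 + 1) x) = 0 :=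
        le_antisymm ((hmin x hx1).trans_eq (gdist_self w x)) (zero_le)
      rw [dist_zero hwsym hA0 hAnest hAk hpv hP x (pv (0 + 1) x) h0]
      exact zero_le
    · by_cases hb : ∀ a ∈ A (0 + 1), gdist G w x y < gdist G w x a / 2
      · left
        have hx0 : x ∈ A 0 := by rw [hA0]; trivial
        have hy0 : y ∈ A 0 := by rw [hA0]; trivial
        have hle := gdistH_le_of_bunch hP hx0 hx1 (Or.inl ⟨hy0, hb⟩)
        refine hle.trans ?_
        simp only [Nat.cast_zero, mul_zero, zero_div, add_zero, ENNReal.ofReal_one, one_mul]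
        exact le_rfl
      · push_neg at hb
        obtain ⟨a, haA, hab⟩ := hb
        right
        have hne : (A (0 + 1)).Nonempty := ⟨a, haA⟩
        have h1k := nonempty_lt_k hAnest hAk hne
        obtain ⟨hpA, hmin⟩ := hpv (0 + 1) h1k x hne
        have ha2 : gdist G w x a ≤ 2 * gdist G w x y := by
          calc gdist G w x a = 2 * (gdist G w x a / 2) :=
                (ENNReal.mul_div_cancel two_ne_zero ENNReal.ofNat_ne_top).symm
          _ ≤ 2 * gdist G w x y := mul_le_mul_right hab 2
        have h2c : (2 : ℝ≥0∞) ≤ ENNReal.ofReal (2 * Δ / (Δ - 5)) := by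
          rw [show (2 : ℝ≥0∞) = ENNReal.ofReal 2 by simp]
          refine ENNReal.ofReal_le_ofReal ?_
          rw [le_div_iff₀ hΔ5]
          linarith
        refine ⟨hne, (reach_pivot hA0 hAnest hAk hP hne hx1).trans
          (((hmin a haA).trans ha2).trans (mul_le_mul_left h2c _))⟩
  | succ i₀ ih =>
    intro x y Wxy hW hfar
    by_cases hx1 : x ∈ A (i₀ + 1 + 1)
    · right
      refine ⟨⟨x, hx1⟩, ?_⟩
      have h1k : i₀ + 1 + 1 < k := nonempty_lt_k hAnest hAk ⟨x, hx1⟩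
      obtain ⟨_, hmin⟩ := hpv (i₀ + 1 + 1) h1k x ⟨x, hx1⟩
      have h0 : gdist G w x (pv (i₀ + 1 + 1) x) = 0 :=
        le_antisymm ((hmin x hx1).trans_eq (gdist_self w x)) (zero_le)
      rw [dist_zero hwsym hA0 hAnest hAk hpv hP x (pv (i₀ + 1 + 1) x) h0]
      exact zero_le
    · obtain ⟨q, hqpath, hqsh, hqmax⟩ := hW
      have hdfin : gdist G w x y ≠ ⊤ := gdist_ne_top w hconn hwfin x y
      have hW't : Wxy ≠ ⊤ :=
        ne_top_of_le_ne_top hdfin (hqmax ▸ (maxW_le_wWeight q).trans_eq hqsh)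
      have hLt : ENNReal.ofReal ((3 * Δ) ^ i₀) * Wxy ≠ ⊤ :=
        ENNReal.mul_ne_top ENNReal.ofReal_ne_top hW't
      have h3Δ1 : (1 : ℝ) ≤ 3 * Δ := by linarith
      have hWL : Wxy ≤ ENNReal.ofReal ((3 * Δ) ^ i₀) * Wxy := by
        nth_rewrite 1 [← one_mul Wxy]
        exact mul_le_mul_left (ENNReal.one_le_ofReal.2 (one_le_pow₀ h3Δ1)) Wxy
      have h3ΔL : ENNReal.ofReal (3 * Δ) * (ENNReal.ofReal ((3 * Δ) ^ i₀) * Wxy) ≤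
          gdist G w x y := by
        rw [← mul_assoc, ← ENNReal.ofReal_mul (by linarith : (0:ℝ) ≤ 3 * Δ), ← pow_succ']
        exact hfar
      have hLg : ENNReal.ofReal ((3 * Δ) ^ i₀) * Wxy ≤ gdist G w x y := by
        refine le_trans ?_ h3ΔL
        nth_rewrite 1 [← one_mul (ENNReal.ofReal ((3 * Δ) ^ i₀) * Wxy)]
        exact mul_le_mul_left (ENNReal.one_le_ofReal.2 (by linarith)) _
      have hpre0 : gdist (spanGraph G w A pv k P) w x x ≤
          ENNReal.ofReal (1 + 8 * i₀ / (Δ - 5)) * gdist G w x x := by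
        rw [gdist_self, gdist_self, mul_zero]
      have hOn0 : gdist G w x x + gdist G w x y = gdist G w x y := by
        rw [gdist_self, zero_add]
      have hc1mono : ENNReal.ofReal (1 + 8 * i₀ / (Δ - 5)) ≤
          ENNReal.ofReal (1 + 8 * (i₀ + 1 : ℕ) / (Δ - 5)) := by
        refine ENNReal.ofReal_le_ofReal ?_
        have hnn : (0:ℝ) ≤ 8 / (Δ - 5) := by positivity
        have he : 8 * ((i₀ + 1 : ℕ) : ℝ) / (Δ - 5) = 8 * (i₀:ℝ) / (Δ - 5) + 8 / (Δ - 5) := by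
          push_cast
          ring
        linarith
      rcases phaseL hconn hwsym hwfin i₀ ih Wxy (ENNReal.ofReal ((3 * Δ) ^ i₀) * Wxy)
          hW't hLt hWL (fun {g} hg => hg) x y q.length q le_rfl hqpath hqsh hqmax.le hLg
          hOn0 hpre0 with hL1 | ⟨b, c', hadd3, hne, hdbu, hDbu, hdcv, hDcv, hpreb, hsufc⟩
      · exact Or.inl (hL1.trans (mul_le_mul_left hc1mono _))
      · -- final dichotomy at the pivot u of the first bad piece
        set L := ENNReal.ofReal ((3 * Δ) ^ i₀) * Wxy with hLdef
        set M := ENNReal.ofReal (2 * Δ / (Δ - 5)) * (3 * L) with hMdef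
        set u := pv (i₀ + 1) b with hudef
        set v := pv (i₀ + 1) c' with hvdef
        have hik : i₀ + 1 < k := nonempty_lt_k hAnest hAk hne
        obtain ⟨huA, _⟩ := hpv (i₀ + 1) hik b hne
        obtain ⟨hvA, _⟩ := hpv (i₀ + 1) hik c' hne
        have hbc'd : gdist G w x b + gdist G w b c' ≤ gdist G w x y :=
          hadd3 ▸ le_self_add
        have hduv : gdist G w u v ≤ M + gdist G w b c' + M := by
          calc gdist G w u v ≤ gdist G w u b + gdist G w b c' + gdist G w c' v := by
                refine le_trans (gdist_triangle w u c' v) ?_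
                exact add_le_add_left (gdist_triangle w u b c') _
          _ ≤ M + gdist G w b c' + M := by
                refine add_le_add (add_le_add ?_ le_rfl) hdcv
                rw [gdist_comm w hwsym u b]
                exact hdbu
        have hMfin : M ≠ ⊤ := ENNReal.mul_ne_top ENNReal.ofReal_ne_top
          (ENNReal.mul_ne_top (by norm_num) hLt)
        have hXfin : M + gdist G w b c' + M ≠ ⊤ := by
          refine ENNReal.add_ne_top.2 ⟨ENNReal.add_ne_top.2 ⟨hMfin, ?_⟩, hMfin⟩
          exact gdist_ne_top w hconn hwfin b c'
        have hMd : ∀ r : ℝ, 0 ≤ r →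
            ENNReal.ofReal r * M ≤ ENNReal.ofReal (2 * r / (Δ - 5)) * gdist G w x y := by
          intro r hr
          have h1 : ENNReal.ofReal (2 * r / (Δ - 5)) * (ENNReal.ofReal (3 * Δ) * L) ≤
              ENNReal.ofReal (2 * r / (Δ - 5)) * gdist G w x y := mul_le_mul_right h3ΔL _
          refine le_trans (le_of_eq ?_) h1
          rw [hMdef, show (3 : ℝ≥0∞) = ENNReal.ofReal 3 from (ENNReal.ofReal_ofNat 3).symm]
          have e1 : ENNReal.ofReal r *
              (ENNReal.ofReal (2 * Δ / (Δ - 5)) * (ENNReal.ofReal 3 * L)) =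
              ENNReal.ofReal r * ENNReal.ofReal (2 * Δ / (Δ - 5)) * ENNReal.ofReal 3 * L := by
            ring
          have e2 : ENNReal.ofReal (2 * r / (Δ - 5)) * (ENNReal.ofReal (3 * Δ) * L) =
              ENNReal.ofReal (2 * r / (Δ - 5)) * ENNReal.ofReal (3 * Δ) * L := by
            ring
          rw [e1, e2, ← ENNReal.ofReal_mul hr, ← ENNReal.ofReal_mul (by positivity),
            ← ENNReal.ofReal_mul (by positivity)]
          congr 2
          field_simp
        by_cases hjump : ∀ a ∈ A (i₀ + 1 + 1),
            2 * (M + gdist G w b c' + M) < gdist G w u a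
        · -- option 1: jump from u to v through the half-bunch of u
          left
          have huNot : u ∉ A (i₀ + 1 + 1) := by
            intro hmem
            have := hjump u hmem
            rw [gdist_self] at this
            exact absurd this (not_lt.2 (zero_le))
          have hbun : v ∈ halfBunch G w A pv k (i₀ + 1) u := by
            refine Or.inl ⟨hvA, fun a ha => lt_of_le_of_lt hduv ?_⟩
            have h2X := hjump a ha
            rw [ENNReal.lt_div_iff_mul_lt (Or.inl two_ne_zero) (Or.inl ENNReal.ofNat_ne_top),
              mul_comm]
            exact h2X
          have hDuv : gdist (spanGraph G w A pv k P) w u v ≤ gdist G w u v :=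
            gdistH_le_of_bunch hP huA huNot hbun
          have hroute : gdist (spanGraph G w A pv k P) w x y ≤
              ENNReal.ofReal (1 + 8 * i₀ / (Δ - 5)) * gdist G w x b +
                (M + ((M + gdist G w b c' + M) +
                  (M + ENNReal.ofReal (1 + 8 * i₀ / (Δ - 5)) * gdist G w c' y))) := by
            calc gdist (spanGraph G w A pv k P) w x y ≤
                gdist (spanGraph G w A pv k P) w x b +
                  gdist (spanGraph G w A pv k P) w b y := gdist_triangle w x b y
            _ ≤ gdist (spanGraph G w A pv k P) w x b +
                (gdist (spanGraph G w A pv k P) w b u +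
                  (gdist (spanGraph G w A pv k P) w u v +
                    (gdist (spanGraph G w A pv k P) w v c' +
                      gdist (spanGraph G w A pv k P) w c' y))) := by
                  refine add_le_add_right ?_ _
                  refine le_trans (gdist_triangle w b u y) (add_le_add_right ?_ _)
                  refine le_trans (gdist_triangle w u v y) (add_le_add_right ?_ _)
                  exact gdist_triangle w v c' y
            _ ≤ ENNReal.ofReal (1 + 8 * i₀ / (Δ - 5)) * gdist G w x b +
                (M + ((M + gdist G w b c' + M) +
                  (M + ENNReal.ofReal (1 + 8 * i₀ / (Δ - 5)) * gdist G w c' y))) := by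
                  refine add_le_add hpreb (add_le_add hDbu (add_le_add (hDuv.trans hduv)
                    (add_le_add ?_ hsufc)))
                  rw [gdist_comm w (hwsymH hwsym) v c']
                  exact hDcv
          have hre : ENNReal.ofReal (1 + 8 * i₀ / (Δ - 5)) * gdist G w x b +
              (M + ((M + gdist G w b c' + M) +
                (M + ENNReal.ofReal (1 + 8 * i₀ / (Δ - 5)) * gdist G w c' y))) =
              (ENNReal.ofReal (1 + 8 * i₀ / (Δ - 5)) * gdist G w x b + gdist G w b c' +
                ENNReal.ofReal (1 + 8 * i₀ / (Δ - 5)) * gdist G w c' y) + 4 * M := by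
            ring
          have hone : (1 : ℝ≥0∞) ≤ ENNReal.ofReal (1 + 8 * i₀ / (Δ - 5)) := by
            refine ENNReal.one_le_ofReal.2 ?_
            have : 0 ≤ 8 * (i₀:ℝ) / (Δ - 5) := by positivity
            linarith
          have hmid : ENNReal.ofReal (1 + 8 * i₀ / (Δ - 5)) * gdist G w x b +
                gdist G w b c' +
                ENNReal.ofReal (1 + 8 * i₀ / (Δ - 5)) * gdist G w c' y ≤
              ENNReal.ofReal (1 + 8 * i₀ / (Δ - 5)) * gdist G w x y := by
            calc ENNReal.ofReal (1 + 8 * i₀ / (Δ - 5)) * gdist G w x b + gdist G w b c' +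
                ENNReal.ofReal (1 + 8 * i₀ / (Δ - 5)) * gdist G w c' y ≤
                ENNReal.ofReal (1 + 8 * i₀ / (Δ - 5)) * gdist G w x b +
                  ENNReal.ofReal (1 + 8 * i₀ / (Δ - 5)) * gdist G w b c' +
                  ENNReal.ofReal (1 + 8 * i₀ / (Δ - 5)) * gdist G w c' y := by
                    refine add_le_add_left (add_le_add_right ?_ _) _
                    nth_rewrite 1 [← one_mul (gdist G w b c')]
                    exact mul_le_mul_left hone _
            _ = ENNReal.ofReal (1 + 8 * i₀ / (Δ - 5)) *
                  (gdist G w x b + gdist G w b c' + gdist G w c' y) := by ring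
            _ = ENNReal.ofReal (1 + 8 * i₀ / (Δ - 5)) * gdist G w x y := by rw [hadd3]
          have h4M : 4 * M ≤ ENNReal.ofReal (8 / (Δ - 5)) * gdist G w x y := by
            rw [show (4 : ℝ≥0∞) = ENNReal.ofReal 4 from (ENNReal.ofReal_ofNat 4).symm]
            refine (hMd 4 (by norm_num)).trans (le_of_eq ?_)
            congr 2
            ring
          refine hroute.trans ?_
          rw [hre]
          refine le_trans (add_le_add hmid h4M) ?_
          rw [← add_mul, ← ENNReal.ofReal_add (by positivity) (by positivity)]
          refine mul_le_mul_left (ENNReal.ofReal_le_ofReal (le_of_eq ?_)) _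
          push_cast
          ring
        · push_neg at hjump
          obtain ⟨a, haA, ha2X⟩ := hjump
          right
          have hne2 : (A (i₀ + 1 + 1)).Nonempty := ⟨a, haA⟩
          have hik2 : i₀ + 1 + 1 < k := nonempty_lt_k hAnest hAk hne2
          obtain ⟨_, hmin2⟩ := hpv (i₀ + 1 + 1) hik2 x hne2
          have hxa : gdist G w x a ≤
              gdist G w x b + M + 2 * (M + gdist G w b c' + M) := by
            calc gdist G w x a ≤ gdist G w x u + gdist G w u a := gdist_triangle w x u a
            _ ≤ (gdist G w x b + gdist G w b u) + 2 * (M + gdist G w b c' + M) :=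
                add_le_add (gdist_triangle w x b u) ha2X
            _ ≤ gdist G w x b + M + 2 * (M + gdist G w b c' + M) :=
                add_le_add_left (add_le_add_right hdbu _) _
          have hsum : gdist G w x b + M + 2 * (M + gdist G w b c' + M) =
              (gdist G w x b + 2 * gdist G w b c') + 5 * M := by ring
          have hxb2 : gdist G w x b + 2 * gdist G w b c' ≤ 2 * gdist G w x y := by
            have h1 : gdist G w x b + 2 * gdist G w b c' ≤
                2 * (gdist G w x b + gdist G w b c') := by
              rw [mul_add]
              refine add_le_add_left ?_ _
              nth_rewrite 1 [← one_mul (gdist G w x b)]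
              exact mul_le_mul_left (by norm_num) _
            exact h1.trans (mul_le_mul_right hbc'd 2)
          have h5M : 5 * M ≤ ENNReal.ofReal (10 / (Δ - 5)) * gdist G w x y := by
            rw [show (5 : ℝ≥0∞) = ENNReal.ofReal 5 from (ENNReal.ofReal_ofNat 5).symm]
            refine (hMd 5 (by norm_num)).trans (le_of_eq ?_)
            congr 2
            ring
          have hfinal : gdist G w x (pv (i₀ + 1 + 1) x) ≤
              ENNReal.ofReal (2 * Δ / (Δ - 5)) * gdist G w x y := by
            refine ((hmin2 a haA).trans (hxa.trans_eq hsum)).trans ?_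
            refine le_trans (add_le_add hxb2 h5M) ?_
            rw [show (2 : ℝ≥0∞) = ENNReal.ofReal 2 from (ENNReal.ofReal_ofNat 2).symm,
              ← add_mul, ← ENNReal.ofReal_add (by norm_num) (by positivity)]
            refine mul_le_mul_left (ENNReal.ofReal_le_ofReal (le_of_eq ?_)) _
            field_simp
            ring
          exact ⟨hne2, (reach_pivot hA0 hAnest hAk hP hne2 hx1).trans hfinal⟩


end phases

end main

/-- Lemma D.2: for `x, y` with `d_G(x,y) ≥ (3Δ)^i · W(x,y)` and `Δ > 5`, either
`d_H(x,y) ≤ (1 + 8i/(Δ-5)) d_G(x,y)`, or `A_{i+1} ≠ ∅` and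
`d_H(x, p_{i+1}(x)) ≤ (2Δ/(Δ-5)) d_G(x,y)`. -/
theorem statement11 [Fintype V] (G : SimpleGraph V) (hconn : G.Connected)
    (w : V → V → ℝ≥0∞) (hwsym : ∀ u v, G.Adj u v → w u v = w v u)
    (hwfin : ∀ u v, G.Adj u v → w u v ≠ ⊤)
    (k : ℕ) (hk : 1 ≤ k) (A : ℕ → Set V) (hA0 : A 0 = Set.univ)
    (hAnest : ∀ i, A (i + 1) ⊆ A i) (hAk : A k = ∅)
    (pv : ℕ → V → V)
    (hpv : ∀ i, i < k → ∀ v : V, (A i).Nonempty →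
      pv i v ∈ A i ∧ ∀ a ∈ A i, gdist G w v (pv i v) ≤ gdist G w v a)
    (P : ∀ u v : V, G.Walk u v)
    (hP : ∀ u v i, u ∈ A i → u ∉ A (i + 1) → v ∈ halfBunch G w A pv k i u →
      (P u v).IsPath ∧ wWeight w (P u v) = gdist G w u v)
    (Δ : ℝ) (hΔ : 5 < Δ) (i : ℕ) (hi : i < k) (x y : V) (Wxy : ℝ≥0∞)
    (hW : ∃ q : G.Walk x y, q.IsPath ∧ wWeight w q = gdist G w x y ∧ maxW w q = Wxy)
    (hfar : ENNReal.ofReal ((3 * Δ) ^ i) * Wxy ≤ gdist G w x y) :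
    gdist (spanGraph G w A pv k P) w x y ≤
        ENNReal.ofReal (1 + 8 * i / (Δ - 5)) * gdist G w x y ∨
      ((A (i + 1)).Nonempty ∧
        gdist (spanGraph G w A pv k P) w x (pv (i + 1) x) ≤
          ENNReal.ofReal (2 * Δ / (Δ - 5)) * gdist G w x y) :=
  main_all hconn hwsym hwfin hA0 hAnest hAk hpv hP hΔ i x y Wxy hW hfar

end ASP
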